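/- In any profile whose antisymmetric margin function on {a,b,c,d} satisfies 0 < m(d,a) < m(b,d) < m(d,c) < m(b,a) < m(a,c) < m(c,b) (ordinal margin graph M_4), the defensible set is exactly {a, d}. -/
import Mathlib


inductive Alt : Type
  | a | b | c | d
deriving DecidableEq

open Alt

/-- For any antisymmetric margin function realizing M_4, the
defensible set is exactly {a, d}. -/
theorem defensible_M4 (m : Alt → Alt → ℤ) (hanti : ∀ x y, m x y = - m y x)
    (h1 : 0 < m d a) (h2 : m d a < m b d) (h3 : m b d < m d c)
    (h4 : m d c < m b a) (h5 : m b a < m a c) (h6 : m a c < m c b) :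
    {x : Alt | ∀ y : Alt, ∃ z : Alt, m y x ≤ m z y} = {a, d} := by
  have haa := hanti a a; have hbb := hanti b b; have hcc := hanti c c
  have hdd := hanti d d; have hab := hanti a b; have hac := hanti a c
  have had := hanti a d; have hbc := hanti b c; have hbd := hanti b d
  have hcd := hanti c d
  ext x
  simp only [Set.mem_setOf_eq, Set.mem_insert_iff, Set.mem_singleton_iff]
  cases x with
  | a =>
    constructor
    · intro _; left; rfl
    · intro _ y
      cases y with
      | a => exact ⟨a, by linarith⟩
      | b => exact ⟨c, by linarith⟩
      | c => exact ⟨c, by linarith⟩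
      | d => exact ⟨b, by linarith⟩
  | d =>
    constructor
    · intro _; right; rfl
    · intro _ y
      cases y with
      | a => exact ⟨a, by linarith⟩
      | b => exact ⟨c, by linarith⟩
      | c => exact ⟨c, by linarith⟩
      | d => exact ⟨d, by linarith⟩
  | b =>
    constructor
    · intro h
      exfalso
      obtain ⟨z, hz⟩ := h c
      cases z <;> linarith
    · rintro (h | h) <;> exact absurd h (by simp)
  | c =>
    constructor
    · intro h
      exfalso
      obtain ⟨z, hz⟩ := h a
      cases z <;> linarith
    · rintro (h | h) <;> exact absurd h (by simp)
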